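/- arXiv:1611.06558 — 2 statements merged into one kernel-verified Lean document; each statement's English description precedes it below -/
import Mathlib

section
/- Let ψ ∈ 𝒯ₙ (with c₀ = 0, c₁ = 0 in its integral representation). For every pair of commuting families A = (A₁,…,Aₙ) and B = (B₁,…,Bₙ) from Gen(X)ⁿ such that each operator Aᵢ − Bᵢ is bounded and D(Aᵢ) = D(Bᵢ) for i = 1,…,n, the operator ψ(A) − ψ(B) is bounded and ‖ψ(A) − ψ(B)‖ ≤ −(2e/(e−1)) · n · Mⁿ · ψ(−(M/(2n))‖A−B‖), where ‖A−B‖ := (‖A₁−B₁‖,…,‖Aₙ−Bₙ‖) and M := max{M_A, M_B}. -/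
open MeasureTheory Complex ContinuousLinearMap

noncomputable section

/-- A generator of a uniformly bounded `C₀`-semigroup on a complex Banach space `X`,
bundled together with its semigroup `T`, its (maximal) domain `dom` and its action
`gen` (extended by `0` outside of the domain). -/
structure GenOp (X : Type*) [NormedAddCommGroup X] [NormedSpace ℂ X] where
  T : ℝ → X →L[ℂ] X
  T_zero : T 0 = 1
  T_add : ∀ ⦃s t : ℝ⦄, 0 ≤ s → 0 ≤ t → T (s + t) = (T s).comp (T t)
  strong_cont : ∀ x : X, ContinuousOn (fun t => T t x) (Set.Ici 0)
  bounded : ∃ M : ℝ, ∀ t : ℝ, 0 ≤ t → ‖T t‖ ≤ M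
  dom : Submodule ℂ X
  gen : X → X
  mem_dom_iff : ∀ x : X, x ∈ dom ↔ ∃ y : X,
    Filter.Tendsto (fun t : ℝ => (t : ℂ)⁻¹ • (T t x - x)) (nhdsWithin 0 (Set.Ioi 0)) (nhds y)
  gen_spec : ∀ x ∈ dom,
    Filter.Tendsto (fun t : ℝ => (t : ℂ)⁻¹ • (T t x - x)) (nhdsWithin 0 (Set.Ioi 0))
      (nhds (gen x))
  gen_zero : ∀ x, x ∉ dom → gen x = 0

variable {X : Type*} [NormedAddCommGroup X] [NormedSpace ℂ X] [CompleteSpace X]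

/-- Two semigroup generators commute if the corresponding semigroups commute. -/
def GenOp.Commutes (A B : GenOp X) : Prop :=
  ∀ ⦃s t : ℝ⦄, 0 ≤ s → 0 ≤ t → (A.T s).comp (B.T t) = (B.T t).comp (A.T s)

/-- The `n`-parameter semigroup `T_A(u) = T_{A₁}(u₁) ⋯ T_{Aₙ}(uₙ)` associated with a
family `A = (A₁, …, Aₙ)` of semigroup generators. -/
def semigrProd {n : ℕ} (A : Fin n → GenOp X) (u : Fin n → ℝ) : X →L[ℂ] X :=
  (List.ofFn fun i => (A i).T (u i)).prod

/-- The representing measure of a Bernstein function `ψ ∈ 𝒯ₙ` with `c₀ = 0`, `c₁ = 0`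
in its integral representation: a positive measure `μ` on `ℝ₊ⁿ \ {0}` such that
`e^{s·u} - 1` is `μ`-integrable for every `s ∈ (-∞,0)ⁿ`.  The associated Bernstein
function is `ψ(s) = ∫ (e^{s·u} - 1) dμ(u)`, see `bPsi`. -/
structure BernsteinMeasure (n : ℕ) where
  μ : Measure (Fin n → ℝ)
  support : μ {u | ¬ ((∀ i, 0 ≤ u i) ∧ u ≠ 0)} = 0
  integrable : ∀ s : Fin n → ℝ, (∀ i, s i < 0) →
    Integrable (fun u => Real.exp (∑ i, s i * u i) - 1) μ

/-- The Bernstein function `ψ(s) = ∫ (e^{s·u} - 1) dμ(u)` of `n` variables associated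
with a representing measure `μ`. -/
def bPsi {n : ℕ} (ρ : BernsteinMeasure n) (s : Fin n → ℝ) : ℝ :=
  ∫ u, (Real.exp (∑ i, s i * u i) - 1) ∂ρ.μ

section Aux

open Set Filter

lemma coe_inv_smul_eq (t : ℝ) (z : X) : (t : ℂ)⁻¹ • z = t⁻¹ • z := by
  rw [← Complex.ofReal_inv, Complex.coe_smul]

lemma clm_map_real_smul (f : X →L[ℂ] X) (r : ℝ) (v : X) : f (r • v) = r • f v := by
  rw [← Complex.coe_smul, _root_.map_smul, Complex.coe_smul]

lemma GenOp.gen_spec' (A : GenOp X) {x : X} (hx : x ∈ A.dom) :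
    Tendsto (fun t : ℝ => t⁻¹ • (A.T t x - x)) (nhdsWithin 0 (Set.Ioi 0)) (nhds (A.gen x)) := by
  refine (A.gen_spec x hx).congr fun t => ?_
  rw [coe_inv_smul_eq]

/-- Joint strong continuity of a uniformly bounded semigroup. -/
lemma GenOp.tendsto_T_apply (A : GenOp X) {M : ℝ} (hM : ∀ t : ℝ, 0 ≤ t → ‖A.T t‖ ≤ M)
    {ι : Type*} {l : Filter ι} {r : ι → ℝ} {w : ι → X} {r₀ : ℝ} {w₀ : X}
    (hr : Tendsto r l (nhds r₀)) (hr0 : ∀ᶠ i in l, 0 ≤ r i) (h0 : 0 ≤ r₀)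
    (hw : Tendsto w l (nhds w₀)) :
    Tendsto (fun i => A.T (r i) (w i)) l (nhds (A.T r₀ w₀)) := by
  have h1 : Tendsto (fun i => A.T (r i) w₀) l (nhds (A.T r₀ w₀)) := by
    have hc : Tendsto (fun s : ℝ => A.T s w₀) (nhdsWithin r₀ (Set.Ici 0)) (nhds (A.T r₀ w₀)) :=
      (A.strong_cont w₀ r₀ h0).tendsto
    exact hc.comp (tendsto_nhdsWithin_iff.2 ⟨hr, hr0⟩)
  have h2 : Tendsto (fun i => A.T (r i) (w i) - A.T (r i) w₀) l (nhds 0) := by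
    apply squeeze_zero_norm' (a := fun i => M * ‖w i - w₀‖)
    · filter_upwards [hr0] with i hi
      rw [← map_sub]
      exact (A.T (r i)).le_of_opNorm_le (hM _ hi) _
    · have : Tendsto (fun i => w i - w₀) l (nhds (w₀ - w₀)) := hw.sub tendsto_const_nhds
      rw [sub_self] at this
      simpa using this.norm.const_mul M
  simpa using h2.add h1

lemma GenOp.T_apply_eq (A : GenOp X) {s t : ℝ} (hs : 0 ≤ s) (ht : 0 ≤ t) (x : X) :
    A.T (s + t) x = A.T s (A.T t x) := by
  rw [A.T_add hs ht]; rfl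

/-- The domain is invariant under the semigroup, and the generator commutes with it. -/
lemma GenOp.T_mem_dom (A : GenOp X) {x : X} (hx : x ∈ A.dom) {s : ℝ} (hs : 0 ≤ s) :
    A.T s x ∈ A.dom ∧ A.gen (A.T s x) = A.T s (A.gen x) := by
  have key : Tendsto (fun t : ℝ => (t : ℂ)⁻¹ • (A.T t (A.T s x) - A.T s x))
      (nhdsWithin 0 (Set.Ioi 0)) (nhds (A.T s (A.gen x))) := by
    have h1 : Tendsto (fun t : ℝ => A.T s ((t : ℂ)⁻¹ • (A.T t x - x)))
        (nhdsWithin 0 (Set.Ioi 0)) (nhds (A.T s (A.gen x))) :=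
      ((A.T s).continuous.tendsto _).comp (A.gen_spec x hx)
    refine h1.congr' ?_
    filter_upwards [self_mem_nhdsWithin] with t ht
    have ht' : (0:ℝ) ≤ t := le_of_lt ht
    have hcomm : A.T t (A.T s x) = A.T s (A.T t x) := by
      rw [← A.T_apply_eq ht' hs, ← A.T_apply_eq hs ht', add_comm]
    rw [_root_.map_smul, map_sub, ← hcomm]
  have hmem : A.T s x ∈ A.dom := (A.mem_dom_iff _).2 ⟨_, key⟩
  exact ⟨hmem, tendsto_nhds_unique (A.gen_spec _ hmem) key⟩

/-- The key one-operator estimate `‖T_A(t)x - T_B(t)x‖ ≤ M_A M_B ‖D‖ t ‖x‖`. -/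
lemma diff_T_estimate (A B : GenOp X) {MA MB : ℝ}
    (hMA : ∀ t : ℝ, 0 ≤ t → ‖A.T t‖ ≤ MA) (hMB : ∀ t : ℝ, 0 ≤ t → ‖B.T t‖ ≤ MB)
    (hdom : A.dom = B.dom) (hdense : Dense (A.dom : Set X))
    (Dc : X →L[ℂ] X) (hD : ∀ x ∈ A.dom, Dc x = A.gen x - B.gen x)
    {t : ℝ} (ht : 0 ≤ t) (x : X) :
    ‖A.T t x - B.T t x‖ ≤ MA * MB * ‖Dc‖ * t * ‖x‖ := by
  have hMA0 : 0 ≤ MA := le_trans (norm_nonneg _) (hMA 0 le_rfl)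
  have hMB0 : 0 ≤ MB := le_trans (norm_nonneg _) (hMB 0 le_rfl)
  -- first, for x in the domain
  have key : ∀ x ∈ A.dom, ‖A.T t x - B.T t x‖ ≤ MA * MB * ‖Dc‖ * t * ‖x‖ := by
    intro x hx
    set F : ℝ → X := fun s => B.T (t - s) (A.T s x) with hF
    have hcont : ContinuousOn F (Set.Icc 0 t) := by
      intro s₀ hs₀
      apply B.tendsto_T_apply hMB
      · exact ((continuous_const.sub continuous_id).tendsto s₀).mono_left nhdsWithin_le_nhds
      · filter_upwards [self_mem_nhdsWithin] with s hs
        exact sub_nonneg.2 hs.2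
      · exact sub_nonneg.2 hs₀.2
      · exact ((A.strong_cont x).mono (Set.Icc_subset_Ici_self)) s₀ hs₀
    have hderiv : ∀ s ∈ Set.Ico 0 t,
        HasDerivWithinAt F (B.T (t - s) (Dc (A.T s x))) (Set.Ici s) s := by
      intro s hs
      obtain ⟨hs0, hst⟩ := hs
      set z := A.T s x with hz
      have hzA : z ∈ A.dom := (A.T_mem_dom hx hs0).1
      have hzB : z ∈ B.dom := hdom ▸ hzA
      rw [hasDerivWithinAt_iff_tendsto_slope, Set.Ici_sdiff_left]
      have hshift : Tendsto (fun y : ℝ => y - s) (nhdsWithin s (Set.Ioi s))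
          (nhdsWithin 0 (Set.Ioi 0)) := by
        refine tendsto_nhdsWithin_iff.2 ⟨?_, ?_⟩
        · have : Tendsto (fun y : ℝ => y - s) (nhds s) (nhds (s - s)) :=
            (continuous_id.sub continuous_const).tendsto s
          rw [sub_self] at this
          exact this.mono_left nhdsWithin_le_nhds
        · filter_upwards [self_mem_nhdsWithin] with y hy
          exact sub_pos.2 (Set.mem_Ioi.1 hy)
      have ha : Tendsto (fun y : ℝ => (y - s)⁻¹ • (A.T y x - z))
          (nhdsWithin s (Set.Ioi s)) (nhds (A.T s (A.gen x))) := by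
        have h1 : Tendsto (fun h : ℝ => A.T s (h⁻¹ • (A.T h x - x)))
            (nhdsWithin 0 (Set.Ioi 0)) (nhds (A.T s (A.gen x))) :=
          ((A.T s).continuous.tendsto _).comp (A.gen_spec' hx)
        refine (h1.comp hshift).congr' ?_
        filter_upwards [self_mem_nhdsWithin] with y hy
        have hy' : (0:ℝ) ≤ y - s := le_of_lt (sub_pos.2 hy)
        show A.T s ((y - s)⁻¹ • (A.T (y - s) x - x)) = (y - s)⁻¹ • (A.T y x - z)
        rw [clm_map_real_smul, map_sub, ← A.T_apply_eq hs0 hy']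
        congr 2
        ring_nf
      have hb : Tendsto (fun y : ℝ => (y - s)⁻¹ • (B.T (y - s) z - z))
          (nhdsWithin s (Set.Ioi s)) (nhds (B.gen z)) :=
        (B.gen_spec' hzB).comp hshift
      have hw := ha.sub hb
      have hmain : Tendsto (fun y : ℝ => B.T (t - y)
          ((y - s)⁻¹ • (A.T y x - z) - (y - s)⁻¹ • (B.T (y - s) z - z)))
          (nhdsWithin s (Set.Ioi s)) (nhds (B.T (t - s) (A.T s (A.gen x) - B.gen z))) := by
        apply B.tendsto_T_apply hMB
        · have : Tendsto (fun y : ℝ => t - y) (nhds s) (nhds (t - s)) :=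
            (continuous_const.sub continuous_id).tendsto s
          exact this.mono_left nhdsWithin_le_nhds
        · filter_upwards [mem_nhdsWithin_of_mem_nhds (Iio_mem_nhds hst)] with y hy
          exact sub_nonneg.2 (le_of_lt hy)
        · exact sub_nonneg.2 (le_of_lt hst)
        · exact hw
      have heq : A.T s (A.gen x) - B.gen z = Dc z := by
        rw [← (A.T_mem_dom hx hs0).2, hD z hzA]
      rw [heq] at hmain
      refine hmain.congr' ?_
      filter_upwards [self_mem_nhdsWithin,
        mem_nhdsWithin_of_mem_nhds (Iio_mem_nhds hst)] with y hy1 hy2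
      have hys : (0:ℝ) ≤ y - s := le_of_lt (sub_pos.2 hy1)
      have hyt : (0:ℝ) ≤ t - y := sub_nonneg.2 (le_of_lt hy2)
      show B.T (t - y) (_) = slope F s y
      rw [slope_def_module]
      have hFs : F s = B.T (t - y) (B.T (y - s) z) := by
        rw [hF]
        show B.T (t - s) z = _
        rw [← B.T_apply_eq hyt hys]
        congr 1
        ring
      have hFy : F y = B.T (t - y) (A.T y x) := rfl
      rw [hFy, hFs, ← map_sub, ← clm_map_real_smul]
      congr 1
      rw [← smul_sub]
      congr 1
      abel
    have hbound : ∀ s ∈ Set.Ico 0 t, ‖B.T (t - s) (Dc (A.T s x))‖ ≤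
        MB * (‖Dc‖ * (MA * ‖x‖)) := by
      intro s hs
      refine le_trans ((B.T (t - s)).le_of_opNorm_le (hMB _ (sub_nonneg.2 (le_of_lt hs.2))) _) ?_
      refine mul_le_mul_of_nonneg_left ?_ hMB0
      refine le_trans (Dc.le_opNorm _) ?_
      refine mul_le_mul_of_nonneg_left ?_ (norm_nonneg _)
      exact (A.T s).le_of_opNorm_le (hMA _ hs.1) _
    have := norm_image_sub_le_of_norm_deriv_right_le_segment hcont hderiv hbound t
      (Set.right_mem_Icc.2 ht)
    have hF0 : F 0 = B.T t x := by
      show B.T (t - 0) (A.T 0 x) = B.T t x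
      rw [sub_zero, A.T_zero]; rfl
    have hFt : F t = A.T t x := by
      show B.T (t - t) (A.T t x) = A.T t x
      rw [sub_self, B.T_zero]; rfl
    rw [hF0, hFt] at this
    calc ‖A.T t x - B.T t x‖ ≤ MB * (‖Dc‖ * (MA * ‖x‖)) * (t - 0) := this
      _ = MA * MB * ‖Dc‖ * t * ‖x‖ := by ring
  -- extend by density
  have hclosed : IsClosed {y : X | ‖A.T t y - B.T t y‖ ≤ MA * MB * ‖Dc‖ * t * ‖y‖} := by
    apply isClosed_le
    · exact ((A.T t).continuous.sub (B.T t).continuous).norm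
    · exact continuous_const.mul continuous_norm
  have hsub : (A.dom : Set X) ⊆ {y : X | ‖A.T t y - B.T t y‖ ≤ MA * MB * ‖Dc‖ * t * ‖y‖} :=
    fun y hy => key y hy
  have : closure (A.dom : Set X) ⊆ _ := hclosed.closure_subset_iff.2 hsub
  rw [hdense.closure_eq] at this
  exact this (Set.mem_univ x)

end Aux
section Aux2

open Set Filter

lemma norm_listProd_le {m : ℝ} (hm : 0 ≤ m) :
    ∀ (k : ℕ) (a : Fin k → (X →L[ℂ] X)), (∀ i, ‖a i‖ ≤ m) →
      ‖(List.ofFn a).prod‖ ≤ m ^ k := by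
  intro k
  induction k with
  | zero =>
    intro a _
    simp only [List.ofFn_zero, List.prod_nil, pow_zero]
    exact (ContinuousLinearMap.norm_id_le : ‖(1 : X →L[ℂ] X)‖ ≤ 1)
  | succ k ih =>
    intro a ha
    rw [List.ofFn_succ, List.prod_cons]
    calc ‖a 0 * (List.ofFn fun i => a i.succ).prod‖
        ≤ ‖a 0‖ * ‖(List.ofFn fun i => a i.succ).prod‖ := norm_mul_le _ _
      _ ≤ m * m ^ k := by
          apply mul_le_mul (ha 0) (ih _ fun i => ha i.succ) (norm_nonneg _) hm
      _ = m ^ (k + 1) := (pow_succ' m k).symm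

lemma prod_diff_estimate {m : ℝ} (hm : 0 ≤ m) :
    ∀ (k : ℕ) (a b : Fin k → (X →L[ℂ] X)), (∀ i, ‖a i‖ ≤ m) → (∀ i, ‖b i‖ ≤ m) →
      ∀ (e : Fin k → ℝ), (∀ i, ‖a i - b i‖ ≤ e i) →
      ‖(List.ofFn a).prod - (List.ofFn b).prod‖ ≤ m ^ (k - 1) * ∑ i, e i := by
  intro k
  induction k with
  | zero =>
    intro a b _ _ e _
    simp
  | succ k ih =>
    intro a b ha hb e he
    have he0 : ∀ i, 0 ≤ e i := fun i => le_trans (norm_nonneg _) (he i)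
    set P := (List.ofFn fun i => a i.succ).prod with hP
    set Q := (List.ofFn fun i => b i.succ).prod with hQ
    have hsum0 : (0:ℝ) ≤ ∑ i : Fin k, e i.succ :=
      Finset.sum_nonneg fun i _ => he0 _
    have hdecomp : (List.ofFn a).prod - (List.ofFn b).prod
        = a 0 * (P - Q) + (a 0 - b 0) * Q := by
      rw [List.ofFn_succ, List.ofFn_succ, List.prod_cons, List.prod_cons, ← hP, ← hQ]
      noncomm_ring
    have h1 : ‖a 0 * (P - Q)‖ ≤ m ^ k * ∑ i : Fin k, e i.succ := by
      calc ‖a 0 * (P - Q)‖ ≤ ‖a 0‖ * ‖P - Q‖ := norm_mul_le _ _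
        _ ≤ m * (m ^ (k - 1) * ∑ i : Fin k, e i.succ) := by
            apply mul_le_mul (ha 0)
              (ih _ _ (fun i => ha i.succ) (fun i => hb i.succ) _ fun i => he i.succ)
              (norm_nonneg _) hm
        _ ≤ m ^ k * ∑ i : Fin k, e i.succ := by
            rcases Nat.eq_zero_or_pos k with hk | hk
            · subst hk; simp
            · rw [← mul_assoc]
              apply mul_le_mul_of_nonneg_right _ hsum0
              rw [← pow_succ']
              rw [Nat.sub_add_cancel hk]
    have h2 : ‖(a 0 - b 0) * Q‖ ≤ e 0 * m ^ k := by
      calc ‖(a 0 - b 0) * Q‖ ≤ ‖a 0 - b 0‖ * ‖Q‖ := norm_mul_le _ _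
        _ ≤ e 0 * m ^ k :=
            mul_le_mul (he 0) (norm_listProd_le hm k _ fun i => hb i.succ)
              (norm_nonneg _) (he0 0)
    calc ‖(List.ofFn a).prod - (List.ofFn b).prod‖
        ≤ ‖a 0 * (P - Q)‖ + ‖(a 0 - b 0) * Q‖ := by rw [hdecomp]; exact norm_add_le _ _
      _ ≤ m ^ k * ∑ i : Fin k, e i.succ + e 0 * m ^ k := add_le_add h1 h2
      _ = m ^ (k + 1 - 1) * ∑ i : Fin (k + 1), e i := by
          rw [Fin.sum_univ_succ]
          simp only [Nat.add_sub_cancel]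
          ring

lemma semigrProd_succ {k : ℕ} (A : Fin (k + 1) → GenOp X) (u : Fin (k + 1) → ℝ) :
    semigrProd A u = (A 0).T (u 0) * semigrProd (fun i => A i.succ) (fun i => u i.succ) := by
  rw [semigrProd, semigrProd, List.ofFn_succ, List.prod_cons]

lemma semigrProd_continuousOn :
    ∀ (k : ℕ) (A : Fin k → GenOp X) (M : ℝ),
      (∀ i, ∀ t : ℝ, 0 ≤ t → ‖(A i).T t‖ ≤ M) → ∀ x : X,
      ContinuousOn (fun u : Fin k → ℝ => semigrProd A u x) {u | ∀ i, 0 ≤ u i} := by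
  intro k
  induction k with
  | zero =>
    intro A M hM x
    have : (fun u : Fin 0 → ℝ => semigrProd A u x) = fun _ => x := by
      funext u
      simp [semigrProd]
    rw [this]
    exact continuousOn_const
  | succ k ih =>
    intro A M hM x
    intro v hv
    have hπ : Continuous (fun u : Fin (k+1) → ℝ => fun i : Fin k => u i.succ) :=
      continuous_pi fun i => continuous_apply _
    have hIH : ContinuousWithinAt
        (fun u : Fin (k+1) → ℝ => semigrProd (fun i => A i.succ) (fun i => u i.succ) x)
        {u | ∀ i, 0 ≤ u i} v := by
      refine ContinuousWithinAt.comp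
        (ih (fun i => A i.succ) M (fun i t ht => hM i.succ t ht) x (fun i => v i.succ) ?_)
        hπ.continuousWithinAt ?_
      · intro i; exact hv i.succ
      · intro u hu i; exact hu i.succ
    have : Tendsto (fun u : Fin (k+1) → ℝ => (A 0).T (u 0)
        (semigrProd (fun i => A i.succ) (fun i => u i.succ) x))
        (nhdsWithin v {u | ∀ i, 0 ≤ u i})
        (nhds ((A 0).T (v 0) (semigrProd (fun i => A i.succ) (fun i => v i.succ) x))) := by
      apply (A 0).tendsto_T_apply (hM 0)
      · exact ((continuous_apply (0 : Fin (k+1))).tendsto v).mono_left nhdsWithin_le_nhds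
      · filter_upwards [self_mem_nhdsWithin] with u hu
        exact hu 0
      · exact hv 0
      · exact hIH
    have hval : semigrProd A v x
        = (A 0).T (v 0) (semigrProd (fun i => A i.succ) (fun i => v i.succ) x) := by
      rw [semigrProd_succ]; rfl
    show Tendsto (fun u => semigrProd A u x) _ (nhds (semigrProd A v x))
    rw [hval]
    refine Tendsto.congr (fun u => ?_) this
    rw [semigrProd_succ]
    rfl

end Aux2
section Aux3

lemma exp_sub_one_pos : (0:ℝ) < Real.exp 1 - 1 := by
  have := Real.add_one_le_exp (1:ℝ)
  linarith

lemma min_one_le_exp {x : ℝ} (hx : 0 ≤ x) :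
    min 1 x ≤ Real.exp 1 / (Real.exp 1 - 1) * (1 - Real.exp (-x)) := by
  have he := exp_sub_one_pos
  have hexp : Real.exp 1 * Real.exp (-1) = 1 := by
    rw [← Real.exp_add]; norm_num
  rw [div_mul_eq_mul_div, le_div_iff₀ he]
  rcases le_total x 1 with h | h
  · rw [min_eq_right h]
    have conv := convexOn_exp.2 (Set.mem_univ (-1:ℝ)) (Set.mem_univ (0:ℝ))
      hx (by linarith : (0:ℝ) ≤ 1 - x) (by ring)
    simp only [smul_eq_mul, mul_zero, add_zero, mul_neg, mul_one, Real.exp_zero] at conv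
    nlinarith [mul_le_mul_of_nonneg_left conv (Real.exp_pos 1).le]
  · rw [min_eq_left h]
    have hmono : Real.exp (-x) ≤ Real.exp (-1) := Real.exp_le_exp.2 (by linarith)
    nlinarith [mul_le_mul_of_nonneg_left hmono (Real.exp_pos 1).le]

lemma sum_min_le_key {k : ℕ} (hk : 0 < k) (c u : Fin k → ℝ)
    (hc : ∀ i, 0 ≤ c i) (hu : ∀ i, 0 ≤ u i) {m : ℝ} (hm : 0 ≤ m) :
    ∑ i, min (2 * m) (m ^ 2 * c i * u i)
      ≤ 2 * Real.exp 1 / (Real.exp 1 - 1) * k * m *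
        (1 - Real.exp (∑ i, -(m / (2 * k)) * c i * u i)) := by
  have hk' : (0:ℝ) < k := Nat.cast_pos.2 hk
  set t : Fin k → ℝ := fun i => m / (2 * k) * c i * u i with ht
  have ht0 : ∀ i, 0 ≤ t i := fun i =>
    mul_nonneg (mul_nonneg (div_nonneg hm (by linarith)) (hc i)) (hu i)
  have hT0 : 0 ≤ ∑ i, t i := Finset.sum_nonneg fun i _ => ht0 i
  have hsum_eq : ∑ i, -(m / (2 * k)) * c i * u i = -(∑ i, t i) := by
    rw [← Finset.sum_neg_distrib]
    refine Finset.sum_congr rfl fun i _ => ?_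
    simp only [ht, neg_mul]
  have hterm : ∀ i, m ^ 2 * c i * u i = 2 * m * k * t i := by
    intro i
    simp only [ht]
    field_simp
  have hstep : ∑ i, min (2 * m) (m ^ 2 * c i * u i)
      ≤ min (2 * m * k) (2 * m * k * ∑ i, t i) := by
    refine le_min ?_ ?_
    · calc ∑ i, min (2 * m) (m ^ 2 * c i * u i) ≤ ∑ _i : Fin k, 2 * m :=
          Finset.sum_le_sum fun i _ => min_le_left _ _
        _ = 2 * m * k := by simp [mul_comm]
    · calc ∑ i, min (2 * m) (m ^ 2 * c i * u i) ≤ ∑ i, m ^ 2 * c i * u i :=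
          Finset.sum_le_sum fun i _ => min_le_right _ _
        _ = 2 * m * k * ∑ i, t i := by
            rw [Finset.mul_sum]
            exact Finset.sum_congr rfl fun i _ => hterm i
  have hpull : min (2 * m * k) (2 * m * k * ∑ i, t i) = 2 * m * k * min 1 (∑ i, t i) := by
    rcases le_total 1 (∑ i, t i) with h | h
    · rw [min_eq_left, min_eq_left h, mul_one]
      nlinarith [mul_nonneg (mul_nonneg (mul_nonneg (by norm_num : (0:ℝ) ≤ 2) hm) hk'.le)
        (sub_nonneg.2 h)]
    · rw [min_eq_right, min_eq_right h]
      nlinarith [mul_nonneg (mul_nonneg (mul_nonneg (by norm_num : (0:ℝ) ≤ 2) hm) hk'.le)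
        (sub_nonneg.2 h)]
  have step3 : min 1 (∑ i, t i)
      ≤ Real.exp 1 / (Real.exp 1 - 1) * (1 - Real.exp (-(∑ i, t i))) :=
    min_one_le_exp hT0
  calc ∑ i, min (2 * m) (m ^ 2 * c i * u i)
      ≤ 2 * m * k * min 1 (∑ i, t i) := by rw [← hpull]; exact hstep
    _ ≤ 2 * m * k * (Real.exp 1 / (Real.exp 1 - 1) * (1 - Real.exp (-(∑ i, t i)))) := by
        apply mul_le_mul_of_nonneg_left step3
        positivity
    _ = 2 * Real.exp 1 / (Real.exp 1 - 1) * k * m * (1 - Real.exp (∑ i, -(m / (2 * k)) * c i * u i)) := by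
        rw [hsum_eq]
        ring

end Aux3

/-- **Theorem 1.** Let `ψ ∈ 𝒯ₙ` (with `c₀ = 0`, `c₁ = 0`).  For every commuting families
`A = (A₁, …, Aₙ)` and `B = (B₁, …, Bₙ)` from `Gen(X)ⁿ` such that the operators `Aᵢ - Bᵢ`
are bounded (with bounded extension `D i`) and `D(Aᵢ) = D(Bᵢ)`, the operator
`ψ(A) - ψ(B)` is bounded (i.e. the densely defined operator
`x ↦ ∫ (T_A(u) - T_B(u))x dμ(u)` on `D(A)` extends to a bounded operator `S` on `X`) and
`‖ψ(A) - ψ(B)‖ ≤ -(2e/(e-1)) n Mⁿ ψ(-(M/(2n)) ‖A - B‖)`, where `M = max {M_A, M_B}`. -/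
theorem bernstein_bounded_perturbation {n : ℕ} (hn : 0 < n) (ρ : BernsteinMeasure n)
    (A B : Fin n → GenOp X)
    (hAcomm : ∀ i j, (A i).Commutes (A j)) (hBcomm : ∀ i j, (B i).Commutes (B j))
    (MA MB : ℝ)
    (hMA : ∀ i, ∀ t : ℝ, 0 ≤ t → ‖(A i).T t‖ ≤ MA)
    (hMB : ∀ i, ∀ t : ℝ, 0 ≤ t → ‖(B i).T t‖ ≤ MB)
    (hdom : ∀ i, (A i).dom = (B i).dom)
    (hdense : ∀ i, Dense ((A i).dom : Set X))
    (D : Fin n → (X →L[ℂ] X))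
    (hD : ∀ i, ∀ x ∈ (A i).dom, D i x = (A i).gen x - (B i).gen x) :
    ∃ S : X →L[ℂ] X,
      (∀ x ∈ ⨅ i, (A i).dom, S x = ∫ u, (semigrProd A u x - semigrProd B u x) ∂ρ.μ) ∧
      ‖S‖ ≤ -(2 * Real.exp 1 / (Real.exp 1 - 1)) * n * (max MA MB) ^ n *
        bPsi ρ (fun i => -(max MA MB / (2 * n)) * ‖D i‖) := by
  classical
  set m := max MA MB with hm_def
  have i0 : Fin n := ⟨0, hn⟩
  have hMA0 : 0 ≤ MA := le_trans (norm_nonneg _) (hMA i0 0 le_rfl)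
  have hm0 : 0 ≤ m := le_trans hMA0 (le_max_left _ _)
  have hn' : (0:ℝ) < n := Nat.cast_pos.2 hn
  have hMA' : ∀ i, ∀ t : ℝ, 0 ≤ t → ‖(A i).T t‖ ≤ m :=
    fun i t ht => (hMA i t ht).trans (le_max_left _ _)
  have hMB' : ∀ i, ∀ t : ℝ, 0 ≤ t → ‖(B i).T t‖ ≤ m :=
    fun i t ht => (hMB i t ht).trans (le_max_right _ _)
  set s : Fin n → ℝ := fun i => -(m / (2 * ↑n)) * ‖D i‖ with hs_def
  set C : ℝ := 2 * Real.exp 1 / (Real.exp 1 - 1) * ↑n * m ^ n with hC_def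
  set g : (Fin n → ℝ) → ℝ := fun u => C * (1 - Real.exp (∑ i, s i * u i)) with hg_def
  have hC0 : 0 ≤ C := by
    rw [hC_def]
    have h1 := exp_sub_one_pos
    have h2 : (0:ℝ) ≤ 2 * Real.exp 1 / (Real.exp 1 - 1) :=
      div_nonneg (by positivity) h1.le
    positivity
  have hsu : ∀ u : Fin n → ℝ, (∀ i, 0 ≤ u i) → (∑ i, s i * u i) ≤ 0 := by
    intro u hu
    apply Finset.sum_nonpos
    intro i _
    have h1 : s i * u i = -(m / (2 * ↑n) * ‖D i‖ * u i) := by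
      simp only [hs_def]; ring
    rw [h1, neg_nonpos]
    have := hu i
    positivity
  have hg0 : ∀ u : Fin n → ℝ, (∀ i, 0 ≤ u i) → 0 ≤ g u := by
    intro u hu
    apply mul_nonneg hC0
    rw [sub_nonneg, ← Real.exp_zero]
    exact Real.exp_le_exp.2 (hsu u hu)
  -- pointwise estimate
  have hpoint : ∀ u : Fin n → ℝ, (∀ i, 0 ≤ u i) → ∀ x : X,
      ‖semigrProd A u x - semigrProd B u x‖ ≤ g u * ‖x‖ := by
    intro u hu x
    have hop : ‖semigrProd A u - semigrProd B u‖
        ≤ m ^ (n - 1) * ∑ i, min (2 * m) (m ^ 2 * ‖D i‖ * u i) := by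
      apply prod_diff_estimate hm0 n (fun i => (A i).T (u i)) (fun i => (B i).T (u i))
        (fun i => hMA' i _ (hu i)) (fun i => hMB' i _ (hu i))
      intro i
      refine le_min (le_trans (norm_sub_le _ _) ?_) ?_
      · have h1 := hMA' i _ (hu i); have h2 := hMB' i _ (hu i); linarith
      · apply ContinuousLinearMap.opNorm_le_bound
        · have := hu i; positivity
        · intro y
          have hest := diff_T_estimate (A i) (B i) (hMA' i) (hMB' i) (hdom i) (hdense i)
            (D i) (hD i) (hu i) y
          calc ‖((A i).T (u i) - (B i).T (u i)) y‖
              = ‖(A i).T (u i) y - (B i).T (u i) y‖ := by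
                rw [ContinuousLinearMap.sub_apply]
            _ ≤ m * m * ‖D i‖ * u i * ‖y‖ := hest
            _ = m ^ 2 * ‖D i‖ * u i * ‖y‖ := by ring
    have hsum := sum_min_le_key hn (fun i => ‖D i‖) u (fun i => norm_nonneg _) hu hm0
    have hpow : m ^ (n - 1) * m = m ^ n := by
      rw [← pow_succ, Nat.sub_add_cancel hn]
    have hchain : m ^ (n - 1) * ∑ i, min (2 * m) (m ^ 2 * ‖D i‖ * u i) ≤ g u := by
      have hexp_eq : ∑ i, -(m / (2 * ↑n)) * ‖D i‖ * u i = ∑ i, s i * u i := by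
        refine Finset.sum_congr rfl fun i _ => ?_
        simp only [hs_def]
      calc m ^ (n - 1) * ∑ i, min (2 * m) (m ^ 2 * ‖D i‖ * u i)
          ≤ m ^ (n - 1) * (2 * Real.exp 1 / (Real.exp 1 - 1) * ↑n * m *
              (1 - Real.exp (∑ i, -(m / (2 * ↑n)) * ‖D i‖ * u i))) :=
            mul_le_mul_of_nonneg_left hsum (pow_nonneg hm0 _)
        _ = g u := by
            rw [hexp_eq, hg_def, hC_def, ← hpow]
            ring
    calc ‖semigrProd A u x - semigrProd B u x‖
        = ‖(semigrProd A u - semigrProd B u) x‖ := by rw [ContinuousLinearMap.sub_apply]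
      _ ≤ ‖semigrProd A u - semigrProd B u‖ * ‖x‖ := ContinuousLinearMap.le_opNorm _ _
      _ ≤ g u * ‖x‖ := mul_le_mul_of_nonneg_right (le_trans hop hchain) (norm_nonneg _)
  -- a.e. support
  have hae : ∀ᵐ u ∂ρ.μ, (∀ i, 0 ≤ u i) ∧ u ≠ 0 := by
    rw [MeasureTheory.ae_iff]
    exact ρ.support
  -- integrability of g
  have hg_int : MeasureTheory.Integrable g ρ.μ := by
    set s' : Fin n → ℝ := fun i => min (s i) (-1) with hs'_def
    have hs'neg : ∀ i, s' i < 0 :=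
      fun i => lt_of_le_of_lt (min_le_right _ _) (by norm_num)
    have hint' := ρ.integrable s' hs'neg
    have h1 : MeasureTheory.Integrable (fun u => 1 - Real.exp (∑ i, s' i * u i)) ρ.μ := by
      refine hint'.neg.congr (Filter.Eventually.of_forall fun u => ?_)
      show -(Real.exp (∑ i, s' i * u i) - 1) = _
      ring
    have hcont : Continuous (fun u : Fin n → ℝ => 1 - Real.exp (∑ i, s i * u i)) := by
      apply continuous_const.sub
      exact Real.continuous_exp.comp
        (continuous_finset_sum _ fun i _ => continuous_const.mul (continuous_apply i))
    have h2 : MeasureTheory.Integrable (fun u => 1 - Real.exp (∑ i, s i * u i)) ρ.μ := by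
      refine MeasureTheory.Integrable.mono h1 hcont.aestronglyMeasurable ?_
      filter_upwards [hae] with u hu
      have hle : ∑ i, s' i * u i ≤ ∑ i, s i * u i :=
        Finset.sum_le_sum fun i _ => mul_le_mul_of_nonneg_right (min_le_left _ _) (hu.1 i)
      have hA : Real.exp (∑ i, s i * u i) ≤ 1 := by
        rw [← Real.exp_zero]; exact Real.exp_le_exp.2 (hsu u hu.1)
      have hB : Real.exp (∑ i, s' i * u i) ≤ 1 := by
        rw [← Real.exp_zero]
        exact Real.exp_le_exp.2 (le_trans hle (hsu u hu.1))
      rw [Real.norm_eq_abs, Real.norm_eq_abs, _root_.abs_of_nonneg (by linarith : (0:ℝ) ≤ 1 - Real.exp (∑ i, s i * u i)),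
        _root_.abs_of_nonneg (by linarith : (0:ℝ) ≤ 1 - Real.exp (∑ i, s' i * u i))]
      have := Real.exp_le_exp.2 hle
      linarith
    exact h2.const_mul C
  -- measurability of integrand
  have hpos_cont : Continuous (fun (u : Fin n → ℝ) (i : Fin n) => max (u i) 0) :=
    continuous_pi fun i => (continuous_apply i).max continuous_const
  have hmeas : ∀ (E : Fin n → GenOp X), (∀ i, ∀ t : ℝ, 0 ≤ t → ‖(E i).T t‖ ≤ m) → ∀ x : X,
      MeasureTheory.AEStronglyMeasurable (fun u => semigrProd E u x) ρ.μ := by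
    intro E hME x
    have hc : Continuous (fun u : Fin n → ℝ => semigrProd E (fun i => max (u i) 0) x) :=
      (semigrProd_continuousOn n E m hME x).comp_continuous hpos_cont
        (fun u i => le_max_right _ _)
    refine hc.aestronglyMeasurable.congr ?_
    filter_upwards [hae] with u hu
    have : (fun i => max (u i) 0) = u := funext fun i => max_eq_left (hu.1 i)
    rw [this]
  -- integrability of integrand
  have hint : ∀ x : X,
      MeasureTheory.Integrable (fun u => semigrProd A u x - semigrProd B u x) ρ.μ := by
    intro x
    refine MeasureTheory.Integrable.mono' (hg_int.mul_const ‖x‖)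
      ((hmeas A hMA' x).sub (hmeas B hMB' x)) ?_
    filter_upwards [hae] with u hu
    exact hpoint u hu.1 x
  -- the bounded operator
  set L : X →ₗ[ℂ] X :=
    { toFun := fun x => ∫ u, (semigrProd A u x - semigrProd B u x) ∂ρ.μ
      map_add' := by
        intro x y
        show (∫ u, (semigrProd A u (x + y) - semigrProd B u (x + y)) ∂ρ.μ) = _
        rw [← MeasureTheory.integral_add (hint x) (hint y)]
        refine MeasureTheory.integral_congr_ae (Filter.Eventually.of_forall fun u => ?_)
        simp only [map_add]
        abel
      map_smul' := by
        intro c x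
        simp only [RingHom.id_apply]
        show (∫ u, (semigrProd A u (c • x) - semigrProd B u (c • x)) ∂ρ.μ) = _
        rw [← MeasureTheory.integral_smul]
        refine MeasureTheory.integral_congr_ae (Filter.Eventually.of_forall fun u => ?_)
        simp only [_root_.map_smul, smul_sub] } with hL_def
  have hLbound : ∀ x : X, ‖L x‖ ≤ (∫ u, g u ∂ρ.μ) * ‖x‖ := by
    intro x
    have h1 : ‖∫ u, (semigrProd A u x - semigrProd B u x) ∂ρ.μ‖ ≤ ∫ u, g u * ‖x‖ ∂ρ.μ :=
      MeasureTheory.norm_integral_le_of_norm_le (hg_int.mul_const _)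
        (hae.mono fun u hu => hpoint u hu.1 x)
    rw [MeasureTheory.integral_mul_const] at h1
    exact h1
  have hK0 : 0 ≤ ∫ u, g u ∂ρ.μ :=
    MeasureTheory.integral_nonneg_of_ae (hae.mono fun u hu => hg0 u hu.1)
  refine ⟨L.mkContinuous (∫ u, g u ∂ρ.μ) hLbound, fun x _ => rfl, ?_⟩
  refine le_trans (L.mkContinuous_norm_le hK0 hLbound) (le_of_eq ?_)
  calc ∫ u, g u ∂ρ.μ
      = C * ∫ u, (1 - Real.exp (∑ i, s i * u i)) ∂ρ.μ :=
        MeasureTheory.integral_const_mul C _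
    _ = C * (- bPsi ρ s) := by
        rw [bPsi, ← MeasureTheory.integral_neg]
        refine congrArg (C * ·) (MeasureTheory.integral_congr_ae
          (Filter.Eventually.of_forall fun u => ?_))
        ring
    _ = -(2 * Real.exp 1 / (Real.exp 1 - 1)) * ↑n * m ^ n * bPsi ρ s := by
        rw [hC_def]; ring
end
end

section
/- Let ψ ∈ 𝒯ₙ (with c₀ = 0, c₁ = 0 in its integral representation). For every commuting family A = (A₁,…,Aₙ) of compact operators from Gen(X), the operator ψ(A) is compact. -/
open MeasureTheory Complex ContinuousLinearMap

noncomputable section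

variable {X : Type*} [NormedAddCommGroup X] [NormedSpace ℂ X] [CompleteSpace X]

set_option linter.unusedSectionVars false
set_option maxHeartbeats 1000000
set_option synthInstance.maxHeartbeats 1000000

section AuxLemmas

open Filter

namespace GenOp

variable {B : GenOp X} {M : ℝ} {G : X →L[ℂ] X}

lemma norm_apply_le (hM : ∀ t : ℝ, 0 ≤ t → ‖B.T t‖ ≤ M) {t : ℝ} (ht : 0 ≤ t) (v : X) :
    ‖B.T t v‖ ≤ M * ‖v‖ :=
  (B.T t).le_of_opNorm_le (hM t ht) v

lemma slope_tendsto (hdom : B.dom = ⊤) (hG : ∀ x, B.gen x = G x) (x : X) :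
    Tendsto (fun t : ℝ => t⁻¹ • (B.T t x - x)) (nhdsWithin 0 (Set.Ioi 0)) (nhds (G x)) := by
  have h := B.gen_spec x (by simp [hdom])
  rw [hG] at h
  simpa only [← Complex.ofReal_inv, Complex.coe_smul] using h

lemma tele (x : X) {h : ℝ} (hh : 0 ≤ h) (N : ℕ) :
    B.T (N * h) x - x = ∑ k ∈ Finset.range N, B.T (k * h) (B.T h x - x) := by
  induction N with
  | zero => simp [B.T_zero]
  | succ N ih =>
    have h1 : ((N + 1 : ℕ) : ℝ) * h = (N : ℝ) * h + h := by push_cast; ring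
    have h2 : B.T ((N : ℝ) * h + h) = (B.T ((N : ℝ) * h)).comp (B.T h) :=
      B.T_add (by positivity) hh
    rw [Finset.sum_range_succ, ← ih, h1, h2]
    simp only [ContinuousLinearMap.comp_apply, map_sub]
    abel

lemma norm_T_sub_self_le (hM : ∀ t : ℝ, 0 ≤ t → ‖B.T t‖ ≤ M)
    (hdom : B.dom = ⊤) (hG : ∀ x, B.gen x = G x) {t : ℝ} (ht : 0 ≤ t) (x : X) :
    ‖B.T t x - x‖ ≤ M * t * ‖G x‖ := by
  rcases eq_or_lt_of_le ht with rfl | ht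
  · simp [B.T_zero]
  have hM0 : 0 ≤ M := (norm_nonneg _).trans (hM 0 le_rfl)
  set y : ℕ → X := fun N => ((t / ((N : ℝ) + 1))⁻¹) • (B.T (t / ((N : ℝ) + 1)) x - x) with hy
  have hty : Tendsto (fun N : ℕ => t / ((N : ℝ) + 1)) atTop (nhdsWithin 0 (Set.Ioi 0)) := by
    apply tendsto_nhdsWithin_of_tendsto_nhds_of_eventually_within
    · have h0 := tendsto_one_div_add_atTop_nhds_zero_nat.const_mul t
      rw [mul_zero] at h0
      simpa [mul_one_div, div_eq_mul_inv] using h0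
    · exact Eventually.of_forall fun N => Set.mem_Ioi.2 (by positivity)
  have hyt : Tendsto y atTop (nhds (G x)) := (slope_tendsto hdom hG x).comp hty
  have key : ∀ N : ℕ, ‖B.T t x - x‖ ≤ M * t * ‖y N‖ := by
    intro N
    have hNh : (0:ℝ) < t / ((N : ℝ) + 1) := by positivity
    set h := t / ((N : ℝ) + 1) with hh
    have hne : h ≠ 0 := hNh.ne'
    have htNh : t = ((N + 1 : ℕ) : ℝ) * h := by
      rw [hh]; push_cast; field_simp
    have e1 : B.T t x - x = ∑ k ∈ Finset.range (N+1), B.T (k * h) (B.T h x - x) := by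
      nth_rewrite 1 [htNh]
      exact tele x hNh.le (N+1)
    rw [e1]
    calc ‖∑ k ∈ Finset.range (N+1), B.T ((k : ℝ) * h) (B.T h x - x)‖
        ≤ ∑ _k ∈ Finset.range (N+1), M * ‖B.T h x - x‖ :=
          norm_sum_le_of_le _ fun k _ => norm_apply_le hM (by positivity) _
      _ = ((N + 1 : ℕ) : ℝ) * (M * ‖B.T h x - x‖) := by
          rw [Finset.sum_const, Finset.card_range, nsmul_eq_mul]
      _ = M * t * ‖y N‖ := by
          have hyn : ‖y N‖ = h⁻¹ * ‖B.T h x - x‖ := by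
            rw [hy]
            simp only [← hh, norm_smul, Real.norm_eq_abs, abs_of_pos (inv_pos.2 hNh)]
          rw [hyn, htNh]
          push_cast
          field_simp
  exact ge_of_tendsto' ((hyt.norm).const_mul (M * t)) key

lemma norm_T_sub_linear_le (hM : ∀ t : ℝ, 0 ≤ t → ‖B.T t‖ ≤ M)
    (hdom : B.dom = ⊤) (hG : ∀ x, B.gen x = G x) {t : ℝ} (ht : 0 ≤ t) (x : X) :
    ‖B.T t x - x - t • G x‖ ≤ M * t ^ 2 * ‖G (G x)‖ := by
  rcases eq_or_lt_of_le ht with rfl | ht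
  · simp [B.T_zero]
  have hM0 : 0 ≤ M := (norm_nonneg _).trans (hM 0 le_rfl)
  set y : ℕ → X := fun N => ((t / ((N : ℝ) + 1))⁻¹) • (B.T (t / ((N : ℝ) + 1)) x - x) with hy
  have hty : Tendsto (fun N : ℕ => t / ((N : ℝ) + 1)) atTop (nhdsWithin 0 (Set.Ioi 0)) := by
    apply tendsto_nhdsWithin_of_tendsto_nhds_of_eventually_within
    · have h0 := tendsto_one_div_add_atTop_nhds_zero_nat.const_mul t
      rw [mul_zero] at h0
      simpa [mul_one_div, div_eq_mul_inv] using h0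
    · exact Eventually.of_forall fun N => Set.mem_Ioi.2 (by positivity)
  have hyt : Tendsto y atTop (nhds (G x)) := (slope_tendsto hdom hG x).comp hty
  have key : ∀ N : ℕ, ‖B.T t x - x - t • G x‖ ≤ M * t * ‖y N - G x‖ + M * t ^ 2 * ‖G (G x)‖ := by
    intro N
    have hNh : (0:ℝ) < t / ((N : ℝ) + 1) := by positivity
    set h := t / ((N : ℝ) + 1) with hh
    have hne : h ≠ 0 := hNh.ne'
    have htNh : t = ((N + 1 : ℕ) : ℝ) * h := by
      rw [hh]; push_cast; field_simp
    have e0 : (∑ _k ∈ Finset.range (N+1), h • G x) = t • G x := by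
      rw [Finset.sum_const, Finset.card_range, ← Nat.cast_smul_eq_nsmul ℝ, smul_smul, ← htNh]
    have e1 : B.T t x - x - t • G x
        = ∑ k ∈ Finset.range (N+1), (B.T ((k : ℝ) * h) (B.T h x - x) - h • G x) := by
      rw [Finset.sum_sub_distrib, e0]
      congr 1
      nth_rewrite 1 [htNh]
      exact tele x hNh.le (N+1)
    rw [e1]
    have hbd : ∀ k ∈ Finset.range (N+1),
        ‖B.T ((k : ℝ) * h) (B.T h x - x) - h • G x‖
          ≤ M * ‖B.T h x - x - h • G x‖ + h * (M * t * ‖G (G x)‖) := by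
      intro k hk
      have hkh : (0:ℝ) ≤ (k : ℝ) * h := by positivity
      have hk' : (k : ℝ) * h ≤ t := by
        have hkN : (k : ℝ) ≤ ((N + 1 : ℕ) : ℝ) := by
          exact_mod_cast (Finset.mem_range.1 hk).le
        rw [htNh]
        nlinarith [hNh.le]
      have dec : B.T ((k : ℝ) * h) (B.T h x - x) - h • G x
          = B.T ((k : ℝ) * h) (B.T h x - x - h • G x) + h • (B.T ((k : ℝ) * h) (G x) - G x) := by
        simp only [map_sub, ContinuousLinearMap.map_smul_of_tower, smul_sub]
        abel
      rw [dec]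
      refine (norm_add_le _ _).trans (add_le_add ?_ ?_)
      · exact norm_apply_le hM hkh _
      · rw [norm_smul, Real.norm_eq_abs, abs_of_pos hNh]
        refine mul_le_mul_of_nonneg_left ?_ hNh.le
        refine (norm_T_sub_self_le hM hdom hG hkh (G x)).trans ?_
        calc M * ((k : ℝ) * h) * ‖G (G x)‖ = (M * ‖G (G x)‖) * ((k : ℝ) * h) := by ring
          _ ≤ (M * ‖G (G x)‖) * t := by
              exact mul_le_mul_of_nonneg_left hk' (mul_nonneg hM0 (norm_nonneg _))
          _ = M * t * ‖G (G x)‖ := by ring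
    calc ‖∑ k ∈ Finset.range (N+1), (B.T ((k : ℝ) * h) (B.T h x - x) - h • G x)‖
        ≤ ∑ _k ∈ Finset.range (N+1), (M * ‖B.T h x - x - h • G x‖ + h * (M * t * ‖G (G x)‖)) :=
          norm_sum_le_of_le _ hbd
      _ = ((N + 1 : ℕ) : ℝ) * (M * ‖B.T h x - x - h • G x‖ + h * (M * t * ‖G (G x)‖)) := by
          rw [Finset.sum_const, Finset.card_range, nsmul_eq_mul]
      _ = M * t * ‖y N - G x‖ + M * t ^ 2 * ‖G (G x)‖ := by
          have hyN : y N - G x = h⁻¹ • (B.T h x - x - h • G x) := by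
            rw [hy]
            simp only [← hh, smul_sub, smul_smul, inv_mul_cancel₀ hne, one_smul]
          have hnyN : ‖y N - G x‖ = h⁻¹ * ‖B.T h x - x - h • G x‖ := by
            rw [hyN, norm_smul, Real.norm_eq_abs, abs_of_pos (inv_pos.2 hNh)]
          rw [hnyN, htNh]
          push_cast
          field_simp
  have hb : Tendsto (fun N => M * t * ‖y N - G x‖ + M * t ^ 2 * ‖G (G x)‖) atTop
      (nhds (M * t ^ 2 * ‖G (G x)‖)) := by
    have h0 : Tendsto (fun N => M * t * ‖y N - G x‖) atTop (nhds 0) := by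
      have h1 : Tendsto (fun N => M * t * ‖y N - G x‖) atTop (nhds (M * t * ‖G x - G x‖)) :=
        ((hyt.sub (tendsto_const_nhds (x := G x))).norm).const_mul (M * t)
      simpa using h1
    simpa using h0.add tendsto_const_nhds
  exact ge_of_tendsto' hb key

lemma opnorm_T_sub_one_le (hM : ∀ t : ℝ, 0 ≤ t → ‖B.T t‖ ≤ M)
    (hdom : B.dom = ⊤) (hG : ∀ x, B.gen x = G x) {t : ℝ} (ht : 0 ≤ t) :
    ‖B.T t - 1‖ ≤ M * t * ‖G‖ := by
  have hM0 : 0 ≤ M := (norm_nonneg _).trans (hM 0 le_rfl)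
  refine ContinuousLinearMap.opNorm_le_bound _ (by positivity) fun x => ?_
  simp only [ContinuousLinearMap.sub_apply, ContinuousLinearMap.one_apply]
  have h1 := norm_T_sub_self_le hM hdom hG ht x
  have h2 := G.le_opNorm x
  nlinarith [norm_nonneg x, norm_nonneg G, norm_nonneg (G x), mul_nonneg hM0 ht]

lemma opnorm_T_sub_one_sub_le (hM : ∀ t : ℝ, 0 ≤ t → ‖B.T t‖ ≤ M)
    (hdom : B.dom = ⊤) (hG : ∀ x, B.gen x = G x) {t : ℝ} (ht : 0 ≤ t) (x : X) :
    ‖B.T t x - x - t • G x‖ ≤ M * t ^ 2 * (‖G‖ * ‖G‖) * ‖x‖ := by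
  have hM0 : 0 ≤ M := (norm_nonneg _).trans (hM 0 le_rfl)
  have h1 := norm_T_sub_linear_le hM hdom hG ht x
  have h2 := G.le_opNorm (G x)
  have h3 := G.le_opNorm x
  have h4 : ‖G (G x)‖ ≤ ‖G‖ * (‖G‖ * ‖x‖) :=
    h2.trans (mul_le_mul_of_nonneg_left h3 (norm_nonneg G))
  refine h1.trans ?_
  calc M * t ^ 2 * ‖G (G x)‖ ≤ M * t ^ 2 * (‖G‖ * (‖G‖ * ‖x‖)) :=
        mul_le_mul_of_nonneg_left h4 (mul_nonneg hM0 (sq_nonneg t))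
    _ = M * t ^ 2 * (‖G‖ * ‖G‖) * ‖x‖ := by ring

lemma isCompactOperator_T_sub_one (hM : ∀ t : ℝ, 0 ≤ t → ‖B.T t‖ ≤ M)
    (hdom : B.dom = ⊤) (hG : ∀ x, B.gen x = G x) (hGc : IsCompactOperator G)
    {t : ℝ} (ht : 0 ≤ t) :
    IsCompactOperator (B.T t - 1 : X →L[ℂ] X) := by
  have hM0 : 0 ≤ M := (norm_nonneg _).trans (hM 0 le_rfl)
  set R : ℕ → (X →L[ℂ] X) := fun N =>
    (∑ k ∈ Finset.range (N+1), (t / ((N : ℝ) + 1)) • B.T ((k : ℝ) * (t / ((N : ℝ) + 1)))).comp G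
    with hR
  have hRc : ∀ N, IsCompactOperator (R N) := by
    intro N
    have h1 := hGc.clm_comp
      (∑ k ∈ Finset.range (N+1), (t / ((N : ℝ) + 1)) • B.T ((k : ℝ) * (t / ((N : ℝ) + 1))))
    have h2 : (⇑(∑ k ∈ Finset.range (N+1),
        (t / ((N : ℝ) + 1)) • B.T ((k : ℝ) * (t / ((N : ℝ) + 1)))) ∘ ⇑G) = ⇑(R N) := by
      rw [hR]; ext x; simp [ContinuousLinearMap.comp_apply]
    rwa [h2] at h1
  have hdist : ∀ N : ℕ, ‖(B.T t - 1) - R N‖ ≤ (M * M * (‖G‖ * ‖G‖) * t ^ 2) / ((N : ℝ) + 1) := by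
    intro N
    have hN1 : (0:ℝ) < (N : ℝ) + 1 := by positivity
    set h := t / ((N : ℝ) + 1) with hh
    have hNh : 0 ≤ h := by positivity
    have htNh : t = ((N + 1 : ℕ) : ℝ) * h := by
      rw [hh]; push_cast; field_simp
    refine ContinuousLinearMap.opNorm_le_bound _ (by positivity) fun x => ?_
    have e1 : ((B.T t - 1) - R N) x
        = ∑ k ∈ Finset.range (N+1), B.T ((k : ℝ) * h) (B.T h x - x - h • G x) := by
      simp only [ContinuousLinearMap.sub_apply, ContinuousLinearMap.one_apply, hR,
        ContinuousLinearMap.comp_apply, ContinuousLinearMap.sum_apply,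
        ContinuousLinearMap.smul_apply, ← hh]
      have e2 : B.T t x - x = ∑ k ∈ Finset.range (N+1), B.T ((k : ℝ) * h) (B.T h x - x) := by
        nth_rewrite 1 [htNh]
        exact tele x hNh (N+1)
      rw [e2, ← Finset.sum_sub_distrib]
      refine Finset.sum_congr rfl fun k _ => ?_
      simp only [map_sub, ContinuousLinearMap.map_smul_of_tower]
    rw [e1]
    calc ‖∑ k ∈ Finset.range (N+1), B.T ((k : ℝ) * h) (B.T h x - x - h • G x)‖
        ≤ ∑ _k ∈ Finset.range (N+1), M * (M * h ^ 2 * (‖G‖ * ‖G‖) * ‖x‖) := by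
          refine norm_sum_le_of_le _ fun k _ => ?_
          refine (norm_apply_le hM (by positivity) _).trans ?_
          exact mul_le_mul_of_nonneg_left (opnorm_T_sub_one_sub_le hM hdom hG hNh x) hM0
      _ = ((N + 1 : ℕ) : ℝ) * (M * (M * h ^ 2 * (‖G‖ * ‖G‖) * ‖x‖)) := by
          rw [Finset.sum_const, Finset.card_range, nsmul_eq_mul]
      _ = (M * M * (‖G‖ * ‖G‖) * t ^ 2) / ((N : ℝ) + 1) * ‖x‖ := by
          rw [htNh]
          push_cast
          field_simp
  have hlim : Tendsto R atTop (nhds (B.T t - 1)) := by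
    rw [tendsto_iff_norm_sub_tendsto_zero]
    refine squeeze_zero (fun N => norm_nonneg _)
      (fun N => le_of_eq_of_le (norm_sub_rev _ _) (hdist N)) ?_
    have h0 := tendsto_one_div_add_atTop_nhds_zero_nat.const_mul (M * M * (‖G‖ * ‖G‖) * t ^ 2)
    rw [mul_zero] at h0
    simpa [mul_one_div, div_eq_mul_inv] using h0
  exact isCompactOperator_of_tendsto hlim (Eventually.of_forall hRc)

lemma opnorm_T_sub_T_le (hM : ∀ t : ℝ, 0 ≤ t → ‖B.T t‖ ≤ M)
    (hdom : B.dom = ⊤) (hG : ∀ x, B.gen x = G x) {s t : ℝ} (hs : 0 ≤ s) (hst : s ≤ t) :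
    ‖B.T t - B.T s‖ ≤ M * M * ‖G‖ * (t - s) := by
  have hM0 : 0 ≤ M := (norm_nonneg _).trans (hM 0 le_rfl)
  have hd : 0 ≤ t - s := by linarith
  have e1 : B.T t = (B.T (t - s)).comp (B.T s) := by
    rw [← B.T_add hd hs]; ring_nf
  have e2 : B.T t - B.T s = (B.T (t - s) - 1).comp (B.T s) := by
    rw [e1]; ext x; simp
  rw [e2]
  calc ‖(B.T (t - s) - 1).comp (B.T s)‖ ≤ ‖B.T (t - s) - 1‖ * ‖B.T s‖ :=
        ContinuousLinearMap.opNorm_comp_le _ _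
    _ ≤ (M * (t - s) * ‖G‖) * M := by
        refine mul_le_mul (opnorm_T_sub_one_le hM hdom hG hd) (hM s hs) (norm_nonneg _) ?_
        positivity
    _ = M * M * ‖G‖ * (t - s) := by ring

lemma continuous_T_max (hM : ∀ t : ℝ, 0 ≤ t → ‖B.T t‖ ≤ M)
    (hdom : B.dom = ⊤) (hG : ∀ x, B.gen x = G x) :
    Continuous fun t : ℝ => B.T (max t 0) := by
  have hM0 : 0 ≤ M := (norm_nonneg _).trans (hM 0 le_rfl)
  have key : ∀ s t : ℝ, s ≤ t →
      ‖B.T (max t 0) - B.T (max s 0)‖ ≤ M * M * ‖G‖ * (t - s) := by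
    intro s t hst
    have h1 : max s 0 ≤ max t 0 := max_le_max hst le_rfl
    have h2 : max t 0 - max s 0 ≤ t - s := by
      rcases le_total s 0 with h | h
      · rcases le_total t 0 with h' | h'
        · simp [max_eq_right h, max_eq_right h']; linarith
        · simp [max_eq_right h, max_eq_left h']; linarith
      · simp [max_eq_left h, max_eq_left (h.trans hst)]
    refine (opnorm_T_sub_T_le hM hdom hG (le_max_right s 0) h1).trans ?_
    have : 0 ≤ M * M * ‖G‖ := by positivity
    nlinarith [this]
  refine (LipschitzWith.of_dist_le_mul (K := (M * M * ‖G‖).toNNReal)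
    (f := fun t : ℝ => B.T (max t 0)) fun a b => ?_).continuous
  have hc : ((M * M * ‖G‖).toNNReal : ℝ) = M * M * ‖G‖ :=
    Real.coe_toNNReal _ (by positivity)
  rcases le_total a b with h | h
  · rw [dist_comm, dist_eq_norm, Real.dist_eq, _root_.abs_of_nonpos (by linarith), hc]
    have := key a b h
    linarith [this]
  · rw [dist_eq_norm, Real.dist_eq, _root_.abs_of_nonneg (by linarith), hc]
    exact key b a h

lemma opnorm_T_sub_one_min (hM : ∀ t : ℝ, 0 ≤ t → ‖B.T t‖ ≤ M)
    (hdom : B.dom = ⊤) (hG : ∀ x, B.gen x = G x) {t : ℝ} (ht : 0 ≤ t) :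
    ‖B.T t - 1‖ ≤ (M + 1) * (1 + ‖G‖) * min t 1 := by
  have hM0 : 0 ≤ M := (norm_nonneg _).trans (hM 0 le_rfl)
  rcases le_total t 1 with h | h
  · rw [min_eq_left h]
    have h1 := opnorm_T_sub_one_le hM hdom hG ht
    nlinarith [norm_nonneg G]
  · rw [min_eq_right h]
    have h1 : ‖B.T t - 1‖ ≤ M + 1 := by
      refine (norm_sub_le _ _).trans ?_
      have h2 := hM t ht
      have h3 : ‖(1 : X →L[ℂ] X)‖ ≤ 1 := by
        rw [ContinuousLinearMap.one_def]
        exact ContinuousLinearMap.norm_id_le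
      linarith
    nlinarith [norm_nonneg G]

end GenOp

lemma min_le_one_sub_exp {t : ℝ} (ht : 0 ≤ t) :
    (1 - Real.exp (-1)) * min t 1 ≤ 1 - Real.exp (-t) := by
  rcases le_total t 1 with h | h
  · rw [min_eq_left h]
    have hc := convexOn_exp.2 (Set.mem_univ (-1:ℝ)) (Set.mem_univ (0:ℝ)) ht
      (by linarith : (0:ℝ) ≤ 1 - t) (by ring)
    simp only [smul_eq_mul, mul_zero, add_zero, mul_neg, mul_one, Real.exp_zero] at hc
    nlinarith [hc]
  · rw [min_eq_right h]
    have : Real.exp (-t) ≤ Real.exp (-1) := Real.exp_le_exp.2 (by linarith)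
    linarith

section ListLemmas

lemma list_prod_norm_le {M : ℝ} (hM1 : 1 ≤ M) :
    ∀ l : List (X →L[ℂ] X), (∀ f ∈ l, ‖f‖ ≤ M) → ‖l.prod‖ ≤ M ^ l.length := by
  intro l
  induction l with
  | nil =>
    intro _
    simp only [List.prod_nil, List.length_nil, pow_zero, ContinuousLinearMap.one_def]
    exact ContinuousLinearMap.norm_id_le
  | cons f l ih =>
    intro hl
    have hM0 : (0:ℝ) ≤ M := zero_le_one.trans hM1
    rw [List.prod_cons, List.length_cons]
    calc ‖f * l.prod‖ ≤ ‖f‖ * ‖l.prod‖ := norm_mul_le _ _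
      _ ≤ M * M ^ l.length := by
          refine mul_le_mul (hl f (List.mem_cons_self))
            (ih fun g hg => hl g (List.mem_cons_of_mem _ hg)) (norm_nonneg _) hM0
      _ = M ^ (l.length + 1) := by rw [pow_succ]; ring

lemma list_prod_sub_one_norm_le {M : ℝ} (hM1 : 1 ≤ M) :
    ∀ l : List (X →L[ℂ] X), (∀ f ∈ l, ‖f‖ ≤ M) →
      ‖l.prod - 1‖ ≤ M ^ l.length * (l.map fun f => ‖f - 1‖).sum := by
  intro l
  induction l with
  | nil => intro _; simp
  | cons f l ih =>
    intro hl
    have hM0 : (0:ℝ) ≤ M := zero_le_one.trans hM1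
    have hMk : (1:ℝ) ≤ M ^ (l.length + 1) := one_le_pow₀ hM1
    have hs0 : (0:ℝ) ≤ (l.map fun f => ‖f - 1‖).sum :=
      List.sum_nonneg (by
        intro a ha
        rcases List.mem_map.1 ha with ⟨g, _, rfl⟩
        exact norm_nonneg _)
    have e1 : (f :: l).prod - 1 = f * (l.prod - 1) + (f - 1) := by
      rw [List.prod_cons]; noncomm_ring
    rw [e1, List.length_cons, List.map_cons, List.sum_cons]
    have h2 := ih fun g hg => hl g (List.mem_cons_of_mem _ hg)
    have h3 : ‖f * (l.prod - 1)‖ ≤ M * (M ^ l.length * (l.map fun f => ‖f - 1‖).sum) := by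
      refine (norm_mul_le _ _).trans ?_
      exact mul_le_mul (hl f (List.mem_cons_self)) h2 (norm_nonneg _) hM0
    refine (norm_add_le _ _).trans ?_
    have hMpow : M * M ^ l.length = M ^ (l.length + 1) := by rw [pow_succ]; ring
    nlinarith [norm_nonneg (f - (1 : X →L[ℂ] X))]

lemma list_prod_sub_one_compact [CompleteSpace X] :
    ∀ l : List (X →L[ℂ] X), (∀ f ∈ l, IsCompactOperator (f - 1 : X →L[ℂ] X)) →
      IsCompactOperator (l.prod - 1 : X →L[ℂ] X) := by
  intro l
  induction l with
  | nil =>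
    intro _
    simp only [List.prod_nil, sub_self]
    have : ⇑(0 : X →L[ℂ] X) = (0 : X → X) := rfl
    rw [this]
    exact isCompactOperator_zero
  | cons f l ih =>
    intro hl
    have hc1 : IsCompactOperator (f * (l.prod - 1) : X →L[ℂ] X) := by
      have h := (ih fun g hg => hl g (List.mem_cons_of_mem _ hg)).clm_comp f
      have e : (⇑f ∘ ⇑(l.prod - 1)) = ⇑(f * (l.prod - 1) : X →L[ℂ] X) := by
        ext x; simp [ContinuousLinearMap.mul_apply]
      rwa [e] at h
    have hc2 := hl f (List.mem_cons_self)
    have key := hc1.add hc2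
    have e1 : (f :: l).prod - 1 = f * (l.prod - 1) + (f - 1) := by
      rw [List.prod_cons]; noncomm_ring
    rw [e1]
    have e2 : ⇑(f * (l.prod - 1) + (f - 1) : X →L[ℂ] X)
        = ⇑(f * (l.prod - 1) : X →L[ℂ] X) + ⇑(f - 1 : X →L[ℂ] X) := by rfl
    rw [e2]
    exact key

end ListLemmas


end AuxLemmas

/-- **Corollary 7.** Let `ψ ∈ 𝒯ₙ` (with `c₀ = 0`, `c₁ = 0`).  For every commuting
family `A = (A₁, …, Aₙ)` of compact operators from `Gen(X)` (i.e. each generator `Aᵢ`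
is an everywhere defined compact operator `G i`), the operator `ψ(A)` is compact. -/
theorem bernstein_value_compact {n : ℕ} (hn : 0 < n) (ρ : BernsteinMeasure n)
    (A : Fin n → GenOp X)
    (hAcomm : ∀ i j, (A i).Commutes (A j))
    (MA : ℝ)
    (hMA : ∀ i, ∀ t : ℝ, 0 ≤ t → ‖(A i).T t‖ ≤ MA)
    (hdomtop : ∀ i, (A i).dom = ⊤)
    (G : Fin n → (X →L[ℂ] X))
    (hG : ∀ i, ∀ x : X, (A i).gen x = G i x)
    (hGcpt : ∀ i, IsCompactOperator (G i)) :
    ∃ S : X →L[ℂ] X,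
      (∀ x : X, S x = ∫ u, (semigrProd A u x - x) ∂ρ.μ) ∧
      IsCompactOperator S := by
  classical
  set M : ℝ := max MA 1 with hM_def
  have hM1 : (1:ℝ) ≤ M := le_max_right _ _
  have hM0 : (0:ℝ) ≤ M := zero_le_one.trans hM1
  have hM : ∀ i, ∀ t : ℝ, 0 ≤ t → ‖(A i).T t‖ ≤ M :=
    fun i t ht => (hMA i t ht).trans (le_max_left _ _)
  -- the (everywhere defined) operator family
  set Φ : (Fin n → ℝ) → (X →L[ℂ] X) :=
    fun u => (List.ofFn fun i => (A i).T (max (u i) 0)).prod with hΦ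
  set F : (Fin n → ℝ) → (X →L[ℂ] X) := fun u => Φ u - 1 with hFdef
  have hΦcont : Continuous Φ := by
    rw [hΦ]
    simp only [List.ofFn_eq_map]
    refine continuous_list_prod _ fun i _ => ?_
    exact (GenOp.continuous_T_max (hM i) (hdomtop i) (hG i)).comp (continuous_apply i)
  have hFcont : Continuous F := hΦcont.sub continuous_const
  -- a.e. support
  have hae : ∀ᵐ u ∂ρ.μ, (∀ i, 0 ≤ u i) ∧ u ≠ 0 := by
    rw [MeasureTheory.ae_iff]
    exact ρ.support
  -- integrable dominating function
  have hD : Integrable (fun u : Fin n → ℝ => 1 - Real.exp (-∑ i, u i)) ρ.μ := by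
    have h1 := (ρ.integrable (fun _ => (-1:ℝ)) (fun _ => by norm_num)).neg
    refine h1.congr (Filter.Eventually.of_forall fun u => ?_)
    simp only [Pi.neg_apply]
    rw [neg_sub]
    congr 2
    simp [neg_one_mul]
  have hexp1 : (0:ℝ) < 1 - Real.exp (-1) := by
    have : Real.exp (-1) < 1 := Real.exp_lt_one_iff.2 (by norm_num)
    linarith
  set c1 : ℝ := (1 - Real.exp (-1))⁻¹ with hc1
  have hc10 : 0 ≤ c1 := by rw [hc1]; positivity
  set C : ℝ := M ^ n * ((M + 1) * (∑ i, (1 + ‖G i‖)) * c1) with hC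
  -- pointwise norm bound
  have hFle : ∀ u : Fin n → ℝ, (∀ i, 0 ≤ u i) →
      ‖F u‖ ≤ C * (1 - Real.exp (-∑ i, u i)) := by
    intro u hu
    have hsum0 : 0 ≤ ∑ i, u i := Finset.sum_nonneg fun i _ => hu i
    have hA1 : ‖F u‖ ≤ M ^ n * ∑ i, ‖(A i).T (u i) - 1‖ := by
      simp only [hFdef, hΦ]
      have hmax : (fun i => (A i).T (max (u i) 0)) = fun i => (A i).T (u i) := by
        funext i; rw [max_eq_left (hu i)]
      rw [hmax]
      have hmem : ∀ f ∈ List.ofFn fun i => (A i).T (u i), ‖f‖ ≤ M := by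
        intro f hf
        rcases (List.mem_ofFn).1 hf with ⟨i, rfl⟩
        exact hM i _ (hu i)
      have h := list_prod_sub_one_norm_le hM1 _ hmem
      simpa [List.map_ofFn, List.sum_ofFn, Function.comp] using h
    have hB : ∀ i, ‖(A i).T (u i) - 1‖
        ≤ (1 + ‖G i‖) * ((M + 1) * (c1 * (1 - Real.exp (-∑ j, u j)))) := by
      intro i
      have h1 := GenOp.opnorm_T_sub_one_min (hM i) (hdomtop i) (hG i) (hu i)
      have h2 : min (u i) 1 ≤ min (∑ j, u j) 1 :=
        min_le_min (Finset.single_le_sum (fun j _ => hu j) (Finset.mem_univ i)) le_rfl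
      have h3 := min_le_one_sub_exp hsum0
      have h4 : min (u i) 1 ≤ c1 * (1 - Real.exp (-∑ j, u j)) := by
        rw [hc1, inv_mul_eq_div, le_div_iff₀ hexp1]
        nlinarith [h2, h3]
      refine h1.trans ?_
      have hco : 0 ≤ (M + 1) * (1 + ‖G i‖) := by positivity
      calc (M + 1) * (1 + ‖G i‖) * min (u i) 1
          ≤ (M + 1) * (1 + ‖G i‖) * (c1 * (1 - Real.exp (-∑ j, u j))) :=
            mul_le_mul_of_nonneg_left h4 hco
        _ = (1 + ‖G i‖) * ((M + 1) * (c1 * (1 - Real.exp (-∑ j, u j)))) := by ring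
    refine hA1.trans ?_
    calc M ^ n * ∑ i, ‖(A i).T (u i) - 1‖
        ≤ M ^ n * ∑ i, (1 + ‖G i‖) * ((M + 1) * (c1 * (1 - Real.exp (-∑ j, u j)))) := by
          refine mul_le_mul_of_nonneg_left (Finset.sum_le_sum fun i _ => hB i) (by positivity)
      _ = C * (1 - Real.exp (-∑ i, u i)) := by
          rw [hC, ← Finset.sum_mul]
          ring
  -- integrability of the operator-valued integrand
  have hFint : Integrable F ρ.μ := by
    refine Integrable.mono' (hD.const_mul C) hFcont.aestronglyMeasurable ?_
    filter_upwards [hae] with u hu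
    exact hFle u hu.1
  -- the operator S
  refine ⟨∫ u, F u ∂ρ.μ, ?_, ?_⟩
  · intro x
    rw [ContinuousLinearMap.integral_apply hFint]
    refine integral_congr_ae ?_
    filter_upwards [hae] with u hu
    have heq : Φ u = semigrProd A u := by
      simp only [hΦ, semigrProd]
      congr 1
      exact congrArg _ (funext fun i => by rw [max_eq_left (hu.1 i)])
    simp only [hFdef, heq, ContinuousLinearMap.sub_apply, ContinuousLinearMap.one_apply]
  · -- compactness
    have hclosed : IsClosed {f : X →L[ℂ] X | IsCompactOperator f} :=
      isClosed_setOf_isCompactOperator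
    set p : Submodule ℂ (X →L[ℂ] X) := compactOperator (RingHom.id ℂ) X X with hp
    haveI hpc : CompleteSpace p := hclosed.completeSpace_coe
    have hFmem : ∀ u, F u ∈ p := by
      intro u
      simp only [hFdef, hΦ]
      refine list_prod_sub_one_compact _ fun f hf => ?_
      rcases (List.mem_ofFn).1 hf with ⟨i, rfl⟩
      exact GenOp.isCompactOperator_T_sub_one (hM i) (hdomtop i) (hG i) (hGcpt i)
        (le_max_right _ _)
    set F' : (Fin n → ℝ) → p := fun u => ⟨F u, hFmem u⟩ with hF'
    have hF'cont : Continuous F' := hFcont.subtype_mk _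
    have hF'int : Integrable F' ρ.μ := ⟨hF'cont.aestronglyMeasurable, hFint.2⟩
    have hcomm := ContinuousLinearMap.integral_comp_comm (𝕜 := ℂ) p.subtypeL hF'int
    have hSe : (∫ u, F u ∂ρ.μ) = p.subtypeL (∫ u, F' u ∂ρ.μ) := by
      refine Eq.trans ?_ hcomm
      rfl
    rw [hSe]
    exact (∫ u, F' u ∂ρ.μ).2
end
end
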